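/- arXiv:1212.4198 — 2 statements merged into one kernel-verified Lean document; each statement's English description precedes it below -/
import Mathlib

section
/- Let β > 0, h₂ > 0, h₁ > 0, γ > 0, π > 0, θ ≥ 0, ρ ≥ 0 and P ≥ 0, and define the per-user link-quality indicator φ(p) = β·log₂(1+h₂·p) − (π+θ·h₁)·p + ρ·log₂(1 + γ/(1+h₁·p)) on [0, P], where log₂ x = ln x / ln 2. Then every maximizer p* of φ over [0, P] satisfies p* ≤ max{ β/((π+θ·h₁)·ln 2) − 1/h₂ , 0 }; that is, the waterfilling point of the concave part of φ is an upper bound for every maximizer of the full (non-concave) indicator. -/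
set_option maxHeartbeats 1000000 in
/-- Every maximizer of the per-user link-quality indicator
`φ(p) = β·log₂(1+h₂·p) − (π+θ·h₁)·p + ρ·log₂(1 + γ/(1+h₁·p))` over `[0, P]`
is upper bounded by the waterfilling point `max (β/((π+θ·h₁)·ln 2) − 1/h₂) 0`
of the concave part of `φ`. -/
theorem maximizer_le_waterfilling (β h₂ h₁ γ pim θ ρ P : ℝ)
    (hβ : 0 < β) (hh₂ : 0 < h₂) (hh₁ : 0 < h₁) (hγ : 0 < γ)
    (hpi : 0 < pim) (hθ : 0 ≤ θ) (hρ : 0 ≤ ρ) (hP : 0 ≤ P)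
    (pstar : ℝ) (hmem : pstar ∈ Set.Icc 0 P)
    (hmax : IsMaxOn
      (fun p : ℝ => β * (Real.log (1 + h₂ * p) / Real.log 2)
        - (pim + θ * h₁) * p
        + ρ * (Real.log (1 + γ / (1 + h₁ * p)) / Real.log 2))
      (Set.Icc 0 P) pstar) :
    pstar ≤ max (β / ((pim + θ * h₁) * Real.log 2) - 1 / h₂) 0 := by
  set c := pim + θ * h₁ with hc
  have hc0 : 0 < c := by have := mul_nonneg hθ hh₁.le; linarith
  have hl2 : 0 < Real.log 2 := Real.log_pos (by norm_num)
  set L := Real.log 2 with hL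
  by_contra hcon
  push_neg at hcon
  set t := max (β / (c * L) - 1 / h₂) 0 with htdef
  obtain ⟨hp0, hpP⟩ := hmem
  have ht0 : 0 ≤ t := le_max_right _ _
  have htW : β / (c * L) - 1 / h₂ ≤ t := le_max_left _ _
  have htmem : t ∈ Set.Icc 0 P := ⟨ht0, le_trans hcon.le hpP⟩
  have hle := hmax htmem
  simp only [Set.mem_setOf_eq] at hle
  have hpt : 0 < pstar - t := sub_pos.mpr hcon
  clear_value t c L
  have h1t : 0 < 1 + h₂ * t := by nlinarith
  have h1p : 0 < 1 + h₂ * pstar := by nlinarith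
  have h1t' : 0 < 1 + h₁ * t := by nlinarith
  have h1p' : 0 < 1 + h₁ * pstar := by nlinarith
  -- key waterfilling inequality
  have hkey : β * h₂ ≤ (1 + h₂ * t) * (c * L) := by
    have hb : β / (c * L) ≤ t + 1 / h₂ := by linarith
    have hb2 : β ≤ (t + 1 / h₂) * (c * L) :=
      (div_le_iff₀ (by positivity)).mp hb
    have hid : (t + 1 / h₂) * h₂ = 1 + h₂ * t := by
      field_simp; ring
    calc β * h₂ ≤ (t + 1 / h₂) * (c * L) * h₂ := mul_le_mul_of_nonneg_right hb2 hh₂.le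
      _ = ((t + 1 / h₂) * h₂) * (c * L) := by ring
      _ = (1 + h₂ * t) * (c * L) := by rw [hid]
  -- strict log bound on the concave part
  have hlog1 : Real.log (1 + h₂ * pstar) - Real.log (1 + h₂ * t)
      < h₂ * (pstar - t) / (1 + h₂ * t) := by
    have hxpos : 0 < (1 + h₂ * pstar) / (1 + h₂ * t) := by positivity
    have hxne : (1 + h₂ * pstar) / (1 + h₂ * t) ≠ 1 :=
      ne_of_gt ((one_lt_div h1t).mpr (by nlinarith))
    have h := Real.log_lt_sub_one_of_pos hxpos hxne
    rw [Real.log_div h1p.ne' h1t.ne'] at h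
    have heq : (1 + h₂ * pstar) / (1 + h₂ * t) - 1
        = h₂ * (pstar - t) / (1 + h₂ * t) := by
      field_simp; ring
    rw [heq] at h
    exact h
  have hlog1' : (Real.log (1 + h₂ * pstar) - Real.log (1 + h₂ * t)) * (1 + h₂ * t)
      < h₂ * (pstar - t) := by
    have h := mul_lt_mul_of_pos_right hlog1 h1t
    rwa [div_mul_cancel₀ _ h1t.ne'] at h
  -- concave part strictly decreases from t to pstar
  have step1 : β * (Real.log (1 + h₂ * pstar) / L) - c * pstar
      < β * (Real.log (1 + h₂ * t) / L) - c * t := by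
    have hstrict : β * Real.log (1 + h₂ * pstar) - β * Real.log (1 + h₂ * t)
        < (c * pstar - c * t) * L := by
      nlinarith [mul_lt_mul_of_pos_left hlog1' hβ,
        mul_le_mul_of_nonneg_right hkey hpt.le]
    have h' : (β * Real.log (1 + h₂ * pstar) - β * Real.log (1 + h₂ * t)) / L
        < c * pstar - c * t := (div_lt_iff₀ hl2).mpr hstrict
    have hd : (β * Real.log (1 + h₂ * pstar) - β * Real.log (1 + h₂ * t)) / L
        = β * (Real.log (1 + h₂ * pstar) / L) - β * (Real.log (1 + h₂ * t) / L) := by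
      ring
    rw [hd] at h'
    linarith
  -- third term is nonincreasing
  have step3 : ρ * (Real.log (1 + γ / (1 + h₁ * pstar)) / L)
      ≤ ρ * (Real.log (1 + γ / (1 + h₁ * t)) / L) := by
    have hlog : Real.log (1 + γ / (1 + h₁ * pstar)) ≤ Real.log (1 + γ / (1 + h₁ * t)) := by
      apply Real.log_le_log (by positivity)
      have : γ / (1 + h₁ * pstar) ≤ γ / (1 + h₁ * t) := by
        apply div_le_div_of_nonneg_left hγ.le h1t'
        nlinarith
      linarith
    gcongr
  linarith
end

section
/- Let M ∈ ℕ, γ > 0, and define r₁(x) = log₂(1 + γ/(1+x)) with log₂ x = ln x / ln 2. Let w, h, p : Fin (M+1) → ℝ satisfy w_m ∈ {0, 1} for all m, Σ_m w_m = 1, h_m ≥ 0 and p_m ≥ 0 for all m. Let p̌ ≥ 0 and ř ≤ log₂(1+γ). Suppose the aggregate short-term constraints hold: Σ_m w_m·h_m·p_m ≤ p̌ and Σ_m w_m·r₁(h_m·p_m) ≥ ř. Define p′_m := w_m·p_m. Then the per-user constraints hold for every m: h_m·p′_m ≤ p̌ and r₁(h_m·p′_m) ≥ ř; moreover w_m·p′_m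 = w_m·p_m for all m, so the scheduled powers (and hence the secondary objective and all scheduled quantities) are unchanged. Consequently, replacing the aggregate short-term constraints by the per-user short-term constraints entails no loss of optimality. -/
/-- Under orthogonal access, if the aggregate short-term interference-power
and primary-rate constraints hold, then the modified powers `p′_m = w_m·p_m`
satisfy the per-user constraints for every user, while leaving all scheduled
powers unchanged (`w_m·p′_m = w_m·p_m`): no loss of optimality is incurred by
imposing per-user short-term constraints. -/
theorem aggregate_implies_per_user (M : ℕ) (γ : ℝ) (hγ : 0 < γ)
    (w h p : Fin (M + 1) → ℝ)
    (hw : ∀ m, w m = 0 ∨ w m = 1) (hsum : ∑ m, w m = 1)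
    (hh : ∀ m, 0 ≤ h m) (hp : ∀ m, 0 ≤ p m)
    (pcheck : ℝ) (hpcheck : 0 ≤ pcheck)
    (rcheck : ℝ) (hrcheck : rcheck ≤ Real.log (1 + γ) / Real.log 2)
    (hPow : ∑ m, w m * (h m * p m) ≤ pcheck)
    (hRate : rcheck ≤
      ∑ m, w m * (Real.log (1 + γ / (1 + h m * p m)) / Real.log 2)) :
    ∀ m, h m * (w m * p m) ≤ pcheck ∧
      rcheck ≤ Real.log (1 + γ / (1 + h m * (w m * p m))) / Real.log 2 ∧
      w m * (w m * p m) = w m * p m := by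
  intro m
  rcases hw m with h0 | h1
  · refine ⟨?_, ?_, ?_⟩
    · simp [h0, hpcheck]
    · simpa [h0] using hrcheck
    · simp [h0]
  · -- all other weights are zero
    have hzero : ∀ k, k ≠ m → w k = 0 := by
      intro k hk
      by_contra hne
      have hk1 : w k = 1 := (hw k).resolve_left hne
      have hle : w m + w k ≤ ∑ j, w j := by
        have := Finset.sum_le_sum_of_subset_of_nonneg
          (s := ({m, k} : Finset (Fin (M+1)))) (Finset.subset_univ _)
          (fun j _ _ => (hw j).elim (fun e => e.ge) (fun e => by rw [e]; norm_num))
        rwa [Finset.sum_pair (fun e => hk (e.symm))] at this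
      rw [h1, hk1, hsum] at hle
      linarith
    have hsingle : ∀ f : Fin (M+1) → ℝ, (∑ k, w k * f k) = f m := by
      intro f
      rw [Finset.sum_eq_single m (fun k _ hk => by simp [hzero k hk])
        (fun hm => absurd (Finset.mem_univ m) hm)]
      simp [h1]
    refine ⟨?_, ?_, ?_⟩
    · have := hPow
      rw [hsingle (fun k => h k * p k)] at this
      simpa [h1] using this
    · have := hRate
      rw [hsingle (fun k => Real.log (1 + γ / (1 + h k * p k)) / Real.log 2)] at this
      simpa [h1] using this
    · simp [h1]
end
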